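/- In a d-dimensional complex Hilbert space, any family of pairwise mutually unbiased orthonormal bases contains at most d+1 bases. -/

import Mathlib

open Finset

noncomputable def mubFv {d : ℕ} (u : EuclideanSpace ℂ (Fin d)) :
    EuclideanSpace ℂ (Fin d × Fin d) :=
  (WithLp.equiv 2 _).symm (fun p => (starRingEnd ℂ) (u p.1) * u p.2)

noncomputable def mubIde (d : ℕ) : EuclideanSpace ℂ (Fin d × Fin d) :=
  (WithLp.equiv 2 _).symm (fun p => if p.1 = p.2 then (1 : ℂ) else 0)

lemma mub_inner_fv_fv {d : ℕ} (u v : EuclideanSpace ℂ (Fin d)) :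
    (inner ℂ (mubFv u) (mubFv v) : ℂ) = ((‖(inner ℂ u v : ℂ)‖ ^ 2 : ℝ) : ℂ) := by
  have h : (inner ℂ (mubFv u) (mubFv v) : ℂ)
      = (starRingEnd ℂ) (inner ℂ u v : ℂ) * (inner ℂ u v : ℂ) := by
    simp only [PiLp.inner_apply, mubFv, WithLp.equiv_symm_apply, PiLp.toLp_apply, RCLike.inner_apply,
      map_sum, map_mul, RingHom.id_apply, starRingEnd_self_apply]
    rw [Fintype.sum_prod_type, Finset.sum_mul_sum]
    refine Finset.sum_congr rfl fun a _ => Finset.sum_congr rfl fun b _ => by ring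
  rw [h, RCLike.conj_mul]
  norm_cast

lemma mub_inner_ide_fv {d : ℕ} (u : EuclideanSpace ℂ (Fin d)) :
    (inner ℂ (mubIde d) (mubFv u) : ℂ) = (inner ℂ u u : ℂ) := by
  simp only [PiLp.inner_apply, mubFv, mubIde, WithLp.equiv_symm_apply, PiLp.toLp_apply, RCLike.inner_apply,
    apply_ite (starRingEnd ℂ), map_one, map_zero]
  rw [Fintype.sum_prod_type]
  simp [Finset.sum_ite_eq, ite_mul]
  exact Finset.sum_congr rfl fun _ _ => mul_comm _ _

lemma mub_inner_ide_ide (d : ℕ) : (inner ℂ (mubIde d) (mubIde d) : ℂ) = (d : ℂ) := by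
  simp only [PiLp.inner_apply, mubIde, WithLp.equiv_symm_apply, PiLp.toLp_apply, RCLike.inner_apply,
    apply_ite (starRingEnd ℂ), map_one, map_zero]
  rw [Fintype.sum_prod_type]
  simp [Finset.sum_ite_eq, Finset.card_univ]

/-- In a `d`-dimensional complex Hilbert space, any family of pairwise mutually
unbiased orthonormal bases contains at most `d + 1` bases. -/
theorem mub_family_card_le_dim_add_one (d n : ℕ) (hd : 1 < d)
    (B : Fin n → OrthonormalBasis (Fin d) ℂ (EuclideanSpace ℂ (Fin d)))
    (hMUB : ∀ i j : Fin n, i ≠ j → ∀ k l : Fin d,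
      ‖(inner ℂ (B i k) (B j l) : ℂ)‖ ^ 2 = 1 / (d : ℝ)) :
    n ≤ d + 1 := by
  classical
  have hd0 : (d : ℂ) ≠ 0 := by
    exact_mod_cast Nat.cast_ne_zero.mpr (by omega)
  set m := d - 1 with hmdef
  have hm : m + 1 = d := by omega
  let emb : Fin m → Fin d := Fin.castLE (by omega)
  let w : Fin n → Fin m → EuclideanSpace ℂ (Fin d × Fin d) :=
    fun i k => mubFv (B i (emb k)) - ((d : ℂ))⁻¹ • mubIde d
  have hBone : ∀ (i : Fin n) (k : Fin d), (inner ℂ (B i k) (B i k) : ℂ) = 1 := by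
    intro i k
    simpa using orthonormal_iff_ite.mp (B i).orthonormal k k
  have hBite : ∀ (i : Fin n) (k l : Fin d),
      (inner ℂ (B i k) (B i l) : ℂ) = if k = l then 1 else 0 :=
    fun i k l => orthonormal_iff_ite.mp (B i).orthonormal k l
  have hfe : ∀ (i : Fin n) (k : Fin d), (inner ℂ (mubFv (B i k)) (mubIde d) : ℂ) = 1 := by
    intro i k
    rw [← inner_conj_symm, mub_inner_ide_fv, hBone, map_one]
  have hef : ∀ (i : Fin n) (k : Fin d), (inner ℂ (mubIde d) (mubFv (B i k)) : ℂ) = 1 := by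
    intro i k; rw [mub_inner_ide_fv, hBone]
  have hcinv : (starRingEnd ℂ) ((d : ℂ))⁻¹ = ((d : ℂ))⁻¹ := by
    simp [map_inv₀]
  have hew : ∀ (i : Fin n) (k : Fin m), (inner ℂ (mubIde d) (w i k) : ℂ) = 0 := by
    intro i k
    simp only [w, inner_sub_right, inner_smul_right, hef, mub_inner_ide_ide]
    field_simp; ring
  have hwe : ∀ (i : Fin n) (k : Fin m), (inner ℂ (w i k) (mubIde d) : ℂ) = 0 := by
    intro i k
    rw [← inner_conj_symm, hew, map_zero]
  have hww : ∀ (i j : Fin n) (k l : Fin m), (inner ℂ (w i k) (w j l) : ℂ)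
      = ((‖(inner ℂ (B i (emb k)) (B j (emb l)) : ℂ)‖ ^ 2 : ℝ) : ℂ) - ((d : ℂ))⁻¹ := by
    intro i j k l
    simp only [w, inner_sub_left, inner_sub_right, inner_smul_left, inner_smul_right,
      mub_inner_fv_fv, hfe, hef, mub_inner_ide_ide, hcinv]
    field_simp; ring
  have hcross : ∀ (i j : Fin n), i ≠ j → ∀ (k l : Fin m), (inner ℂ (w i k) (w j l) : ℂ) = 0 := by
    intro i j hij k l
    rw [hww, hMUB i j hij]
    push_cast
    field_simp; ring
  have hsame : ∀ (i : Fin n) (k l : Fin m),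
      (inner ℂ (w i k) (w i l) : ℂ) = (if k = l then 1 else 0) - ((d : ℂ))⁻¹ := by
    intro i k l
    rw [hww]
    have h2 : (‖(inner ℂ (B i (emb k)) (B i (emb l)) : ℂ)‖ ^ 2 : ℝ) = if k = l then 1 else 0 := by
      rw [hBite]
      by_cases h : emb k = emb l
      · have hkl : k = l := Fin.castLE_injective _ h
        simp [h, hkl]
      · have hkl : k ≠ l := fun hc => h (by rw [hc])
        simp [h, hkl]
    rw [h2]
    split <;> simp
  -- the combined family
  let v : Option (Fin n × Fin m) → EuclideanSpace ℂ (Fin d × Fin d) :=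
    fun o => o.elim (mubIde d) (fun x => w x.1 x.2)
  have hli : LinearIndependent ℂ v := by
    rw [Fintype.linearIndependent_iff]
    intro g hg
    have hinner : ∀ x : EuclideanSpace ℂ (Fin d × Fin d),
        (0 : ℂ) = ∑ o, g o * (inner ℂ x (v o) : ℂ) := by
      intro x
      have : (inner ℂ x (∑ o, g o • v o) : ℂ) = ∑ o, g o * (inner ℂ x (v o) : ℂ) := by
        rw [inner_sum]
        exact Finset.sum_congr rfl fun o _ => by rw [inner_smul_right]
      rw [hg, inner_zero_right] at this
      exact this
    have h0 : g none = 0 := by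
      have h := hinner (mubIde d)
      rw [Fintype.sum_option] at h
      simp only [v, Option.elim] at h
      rw [mub_inner_ide_ide] at h
      have hz : ∑ x : Fin n × Fin m, g (some x) * (inner ℂ (mubIde d) (w x.1 x.2) : ℂ) = 0 :=
        Finset.sum_eq_zero fun x _ => by rw [hew]; ring
      rw [hz, add_zero] at h
      exact (mul_eq_zero.mp h.symm).resolve_right hd0
    have hrest : ∀ (j : Fin n) (l : Fin m), g (some (j, l)) = 0 := by
      intro j l
      have heq : ∀ l' : Fin m,
          g (some (j, l')) = ((d : ℂ))⁻¹ * ∑ k : Fin m, g (some (j, k)) := by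
        intro l'
        have h := hinner (w j l')
        rw [Fintype.sum_option] at h
        simp only [v, Option.elim] at h
        rw [hwe, mul_zero, zero_add, Fintype.sum_prod_type] at h
        rw [Finset.sum_eq_single j
          (fun i _ hij => Finset.sum_eq_zero fun k _ => by
            rw [hcross j i (Ne.symm hij)]; ring)
          (by simp)] at h
        simp only [hsame] at h
        have hsum : ∑ k : Fin m, g (some (j, k)) * ((if l' = k then 1 else 0) - ((d:ℂ))⁻¹)
            = g (some (j, l')) - ((d:ℂ))⁻¹ * ∑ k : Fin m, g (some (j, k)) := by
          simp only [mul_sub, Finset.sum_sub_distrib, mul_ite, mul_one, mul_zero,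
            Finset.sum_ite_eq, Finset.mem_univ, if_true, Finset.mul_sum]
          congr 1
          exact Finset.sum_congr rfl fun k _ => mul_comm _ _
        rw [hsum] at h
        linear_combination -h
      set S := ∑ k : Fin m, g (some (j, k)) with hSdef
      have hSm : S = (m : ℂ) * (((d : ℂ))⁻¹ * S) := by
        calc S = ∑ l' : Fin m, g (some (j, l')) := rfl
        _ = ∑ _l' : Fin m, ((d : ℂ))⁻¹ * S := Finset.sum_congr rfl fun l' _ => heq l'
        _ = (m : ℂ) * (((d : ℂ))⁻¹ * S) := by
            rw [Finset.sum_const, Finset.card_univ, Fintype.card_fin, nsmul_eq_mul]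
      have hmc : (m : ℂ) = (d : ℂ) - 1 := by
        have : ((m : ℕ) : ℂ) + 1 = (d : ℂ) := by exact_mod_cast congrArg Nat.cast hm
        linear_combination this
      have h1 : S * (1 - (m : ℂ) * ((d : ℂ))⁻¹) = 0 := by linear_combination hSm
      have h2 : (1 - (m : ℂ) * ((d : ℂ))⁻¹) ≠ 0 := by
        have h3 : 1 - (m : ℂ) * ((d : ℂ))⁻¹ = ((d : ℂ))⁻¹ := by
          rw [hmc]; field_simp; ring
        rw [h3]
        exact inv_ne_zero hd0
      have hS0 : S = 0 := (mul_eq_zero.mp h1).resolve_right h2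
      rw [heq l, hS0, mul_zero]
    intro o
    match o with
    | none => exact h0
    | some ⟨j, l⟩ => exact hrest j l
  have hcard := hli.fintype_card_le_finrank
  rw [finrank_euclideanSpace] at hcard
  simp only [Fintype.card_option, Fintype.card_prod, Fintype.card_fin] at hcard
  have h1 : n * m ≤ (m + 2) * m := by nlinarith [hm, hcard]
  have hm1 : 0 < m := by omega
  have := Nat.le_of_mul_le_mul_right h1 hm1
  omega
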